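/- Existence and uniqueness of the discounted state distribution: For any finite MDP and any policy π, there exists exactly one function d : S → ℝ satisfying d(s') = (1−γ)·𝟙[s'=s₀] + γ ∑_s d(s) ∑_a π(s,a) P(s,a,s') for all s'; moreover this d satisfies d(s) ≥ 0 for all s and ∑_{s∈S} d(s) = 1. -/

import Mathlib

open Finset

/-- A finite Markov decision process with bounded rewards and discount `γ ∈ (0,1)`. -/
structure FiniteMDP (S A : Type) [Fintype S] [Fintype A] : Type where
  P : S → A → S → ℝ
  r : S → A → ℝ
  γ : ℝ
  s0 : S
  P_nonneg : ∀ s a s', 0 ≤ P s a s'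
  P_sum_one : ∀ s a, ∑ s', P s a s' = 1
  r_bound : ∀ s a, |r s a| ≤ 1
  γ_pos : 0 < γ
  γ_lt_one : γ < 1

variable {S A : Type} [Fintype S] [Fintype A] [DecidableEq S]

/-- `π` is a (stochastic) policy. -/
def IsPolicy (π : S → A → ℝ) : Prop :=
  (∀ s a, 0 ≤ π s a) ∧ ∀ s, ∑ a, π s a = 1

/-- `Q` satisfies the Bellman equation of policy `π`. -/
def IsQ (M : FiniteMDP S A) (π Q : S → A → ℝ) : Prop :=
  ∀ s a, Q s a = M.r s a + M.γ * ∑ s', M.P s a s' * ∑ a', π s' a' * Q s' a'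

/-- `d` is the discounted state (occupancy) distribution of policy `π`. -/
def IsD (M : FiniteMDP S A) (π : S → A → ℝ) (d : S → ℝ) : Prop :=
  ∀ s', d s' = (1 - M.γ) * (if s' = M.s0 then (1 : ℝ) else 0)
      + M.γ * ∑ s, d s * ∑ a, π s a * M.P s a s'

/-- The normalized return `J^π = ∑_s d^π(s) ∑_a π(s,a) r(s,a)`. -/
def Jret (M : FiniteMDP S A) (π : S → A → ℝ) (d : S → ℝ) : ℝ :=
  ∑ s, d s * ∑ a, π s a * M.r s a

/-- The policy advantage function `A^{π'}_π(s) = ∑_a (π'(s,a) − π(s,a)) Q_π(s,a)`. -/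
def polAdv (π' π Q : S → A → ℝ) (s : S) : ℝ :=
  ∑ a, (π' s a - π s a) * Q s a

/-- The expected policy advantage `A^{π'}_{π,d}`. -/
def expPolAdv (π' π Q : S → A → ℝ) (d : S → ℝ) : ℝ :=
  ∑ s, d s * polAdv π' π Q s

/-- `δ(π',π) = max_s ∑_a |π'(s,a) − π(s,a)|`. -/
noncomputable def polDist (π' π : S → A → ℝ) : ℝ :=
  ⨆ s : S, ∑ a, |π' s a - π s a|

/-- `ΔA^{π'}_π = max_{s,s'} |A^{π'}_π(s) − A^{π'}_π(s')|`. -/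
noncomputable def advRange (π' π Q : S → A → ℝ) : ℝ :=
  ⨆ p : S × S, |polAdv π' π Q p.1 - polAdv π' π Q p.2|

/-- Kullback–Leibler divergence between probability vectors on a finite set. -/
noncomputable def KLdiv {B : Type} [Fintype B] (p q : B → ℝ) : ℝ :=
  ∑ a ∈ Finset.univ.filter (fun a => 0 < p a), p a * Real.log (p a / q a)

/-- **Existence and uniqueness of the discounted state distribution**: there is
exactly one `d` satisfying the occupancy fixed-point equation of `π`, and it is
a probability distribution on `S`. -/
theorem d_exists_unique_and_probability
    {S A : Type} [Fintype S] [Fintype A] [DecidableEq S] [Nonempty S] [Nonempty A]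
    (M : FiniteMDP S A) (π : S → A → ℝ) (hπ : IsPolicy π) :
    (∃! d : S → ℝ, IsD M π d) ∧
      ∀ d : S → ℝ, IsD M π d → (∀ s, 0 ≤ d s) ∧ ∑ s, d s = 1 := by
  classical
  obtain ⟨hπ1, hπ2⟩ := hπ
  have hγ0 := M.γ_pos
  have hγ1 := M.γ_lt_one
  set γ := M.γ
  set K : S → S → ℝ := fun s s' => ∑ a, π s a * M.P s a s' with hK
  have hKnn : ∀ s s', 0 ≤ K s s' := fun s s' =>
    Finset.sum_nonneg fun a _ => mul_nonneg (hπ1 s a) (M.P_nonneg s a s')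
  have hKsum : ∀ s, ∑ s', K s s' = 1 := by
    intro s
    rw [hK]
    rw [Finset.sum_comm]
    calc (∑ a, ∑ s', π s a * M.P s a s') = ∑ a, π s a * ∑ s', M.P s a s' := by
          simp [Finset.mul_sum]
      _ = 1 := by simp [M.P_sum_one, hπ2 s]
  set b : S → ℝ := fun s' => (1 - γ) * (if s' = M.s0 then (1 : ℝ) else 0) with hb
  have hbnn : ∀ s', 0 ≤ b s' := by
    intro s'
    have h1 : (0:ℝ) ≤ 1 - γ := by linarith
    have h2 : (0:ℝ) ≤ (if s' = M.s0 then (1:ℝ) else 0) := by positivity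
    exact mul_nonneg h1 h2
  haveI : Fact ((1:ENNReal) ≤ 1) := ⟨le_refl _⟩
  set X := PiLp 1 (fun _ : S => ℝ) with hX
  set T : X → X := fun d => WithLp.toLp 1 (fun s' => b s' + γ * ∑ s, d s * K s s') with hT
  have hdist : ∀ x y : X, dist x y = ∑ s, |x s - y s| := by
    intro x y
    rw [PiLp.dist_eq_sum (by norm_num : (0:ℝ) < (1:ENNReal).toReal)]
    simp [Real.dist_eq]
  have hlip : LipschitzWith ⟨γ, hγ0.le⟩ T := by
    refine LipschitzWith.of_dist_le_mul ?_
    intro x y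
    rw [hdist, hdist]
    have hpt : ∀ s', |T x s' - T y s'| ≤ γ * ∑ s, |x s - y s| * K s s' := by
      intro s'
      have h1 : T x s' - T y s' = γ * ∑ s, (x s - y s) * K s s' := by
        have h2 : ∑ s, (x s - y s) * K s s' = ∑ s, x s * K s s' - ∑ s, y s * K s s' := by
          rw [← Finset.sum_sub_distrib]
          exact Finset.sum_congr rfl fun s _ => by ring
        rw [hT, h2]; ring
      rw [h1, abs_mul, abs_of_nonneg hγ0.le]
      gcongr
      calc |∑ s, (x s - y s) * K s s'| ≤ ∑ s, |(x s - y s) * K s s'| :=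
            Finset.abs_sum_le_sum_abs _ _
        _ = ∑ s, |x s - y s| * K s s' :=
            Finset.sum_congr rfl fun s _ => by rw [abs_mul, abs_of_nonneg (hKnn s s')]
    calc ∑ s', |T x s' - T y s'| ≤ ∑ s', γ * ∑ s, |x s - y s| * K s s' :=
          Finset.sum_le_sum fun s' _ => hpt s'
      _ = γ * ∑ s, |x s - y s| * ∑ s', K s s' := by
          rw [← Finset.mul_sum, Finset.sum_comm]
          congr 1
          exact Finset.sum_congr rfl fun s _ => by rw [Finset.mul_sum]
      _ = (⟨γ, hγ0.le⟩ : NNReal) * ∑ s, |x s - y s| := by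
          simp [hKsum]
  have hc : ContractingWith ⟨γ, hγ0.le⟩ T := ⟨by exact_mod_cast hγ1, hlip⟩
  -- relation between IsD and fixed points
  have hIsD_iff : ∀ d : S → ℝ, IsD M π d ↔ Function.IsFixedPt T (WithLp.toLp 1 d) := by
    intro d
    constructor
    · intro h
      show WithLp.toLp 1 _ = WithLp.toLp 1 d
      congr 1
      funext s'
      exact (h s').symm
    · intro h s'
      exact (congrFun (congrArg WithLp.ofLp h) s').symm
  set dstar : X := hc.fixedPoint T with hdstar
  have hfix : Function.IsFixedPt T dstar := hc.fixedPoint_isFixedPt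
  have hDstar : IsD M π dstar := (hIsD_iff dstar).2 hfix
  -- sum = 1 for any IsD
  have hsum : ∀ d : S → ℝ, IsD M π d → ∑ s, d s = 1 := by
    intro d hd
    have h1 : ∑ s', d s' = ∑ s', b s' + γ * ∑ s, d s := by
      calc ∑ s', d s' = ∑ s', (b s' + γ * ∑ s, d s * K s s') :=
            Finset.sum_congr rfl fun s' _ => hd s'
        _ = ∑ s', b s' + γ * ∑ s', ∑ s, d s * K s s' := by
            rw [Finset.sum_add_distrib, Finset.mul_sum]
        _ = ∑ s', b s' + γ * ∑ s, d s := by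
            rw [Finset.sum_comm]
            congr 2
            calc (∑ s, ∑ s', d s * K s s') = ∑ s, d s * ∑ s', K s s' := by
                  simp [Finset.mul_sum]
              _ = ∑ s, d s := by simp [hKsum]
    have h2 : ∑ s', b s' = 1 - γ := by
      rw [hb, ← Finset.mul_sum]
      simp
    rw [h2] at h1
    have : (1 - γ) * ∑ s, d s = 1 - γ := by linarith
    have hne : (1:ℝ) - γ ≠ 0 := by linarith
    field_simp at this
    linarith [this]
  -- nonnegativity of dstar via iterates
  have hnn : ∀ s, 0 ≤ dstar s := by
    intro s
    have hiter : ∀ n : ℕ, ∀ s', 0 ≤ (T^[n] (0 : X)) s' := by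
      intro n
      induction n with
      | zero => intro s'; simp [hX]
      | succ n ih =>
        intro s'
        rw [Function.iterate_succ_apply']
        have : (0:ℝ) ≤ γ * ∑ t, (T^[n] (0:X)) t * K t s' := by
          apply mul_nonneg hγ0.le
          exact Finset.sum_nonneg fun t _ => mul_nonneg (ih t) (hKnn t s')
        exact add_nonneg (hbnn s') this
    have htend : Filter.Tendsto (fun n => T^[n] (0:X)) Filter.atTop (nhds dstar) :=
      hc.tendsto_iterate_fixedPoint 0
    have hcont : Continuous (fun x : X => x s) :=
      (continuous_apply s).comp (PiLp.continuous_ofLp 1 (fun _ : S => ℝ))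
    have htend' : Filter.Tendsto (fun n => (T^[n] (0:X)) s) Filter.atTop (nhds (dstar s)) :=
      (hcont.tendsto dstar).comp htend
    exact ge_of_tendsto' htend' fun n => hiter n s
  refine ⟨⟨dstar.ofLp, hDstar, ?_⟩, ?_⟩
  · intro d hd
    exact congrArg WithLp.ofLp (hc.fixedPoint_unique ((hIsD_iff d).1 hd))
  · intro d hd
    have : d = dstar.ofLp := congrArg WithLp.ofLp (hc.fixedPoint_unique ((hIsD_iff d).1 hd))
    subst this
    exact ⟨hnn, hsum _ hDstar⟩
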